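/- arXiv:2507.22535 — 4 statements merged into one kernel-verified Lean document; each statement's English description precedes it below -/
import Mathlib

section
/- Let d > 0, c = 1/√(9d), and define g(x) = 3d·ln(1 + cx) − d(1 + cx)³ + d for x > −1/c. Then g(x) ≤ −x²/2 for all x > −1/c. -/
private lemma key_log_ineq (t : ℝ) (ht : 0 < t) :
    3 * Real.log t ≤ t ^ 3 - 1 - 9 / 2 * (t - 1) ^ 2 := by
  set f : ℝ → ℝ := fun s => s ^ 3 - 1 - 9 / 2 * (s - 1) ^ 2 - 3 * Real.log s with hf
  have hderiv : ∀ s ∈ Set.Ioi (0 : ℝ), HasDerivAt f (3 * (s - 1) ^ 3 / s) s := by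
    intro s hs
    have hs0 : (0 : ℝ) < s := hs
    have h1 : HasDerivAt f (3 * s ^ 2 - 9 / 2 * (2 * (s - 1)) - 3 * (1 / s)) s := by
      have := ((hasDerivAt_pow 3 s).sub_const 1).sub
        ((((hasDerivAt_id s).sub_const 1).pow 2).const_mul (9 / 2))
      have hlog := (Real.hasDerivAt_log hs0.ne').const_mul 3
      simpa [hf, Pi.sub_def, mul_comm, mul_assoc, mul_left_comm] using this.sub hlog
    convert h1 using 1
    field_simp
    ring
  have hcont : ContinuousOn f (Set.Ioi 0) := by
    intro s hs
    exact (hderiv s hs).continuousAt.continuousWithinAt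
  have hf1 : f 1 = 0 := by simp [hf]
  rcases le_or_gt 1 t with h | h
  · -- monotone on [1, ∞)
    have hmono : MonotoneOn f (Set.Ici 1) := by
      apply monotoneOn_of_deriv_nonneg (convex_Ici 1)
        (hcont.mono (fun s hs => Set.mem_Ioi.mpr (lt_of_lt_of_le one_pos hs)))
      · intro s hs
        rw [interior_Ici] at hs
        exact ((hderiv s (Set.mem_Ioi.mpr (lt_trans one_pos hs))).differentiableAt).differentiableWithinAt
      · intro s hs
        rw [interior_Ici] at hs
        have hs0 : (0 : ℝ) < s := lt_trans one_pos hs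
        rw [(hderiv s hs0).deriv]
        have h3 : (0:ℝ) ≤ (s - 1) ^ 3 := pow_nonneg (by have := Set.mem_Ioi.mp hs; linarith) 3
        exact div_nonneg (by linarith) hs0.le
    have h0 := hmono (Set.self_mem_Ici) (Set.mem_Ici.mpr h) h
    rw [hf1] at h0
    have h0' : 0 ≤ t ^ 3 - 1 - 9 / 2 * (t - 1) ^ 2 - 3 * Real.log t := h0
    linarith
  · -- antitone on (0, 1]
    have hanti : AntitoneOn f (Set.Icc t 1) := by
      apply antitoneOn_of_deriv_nonpos (convex_Icc t 1)
        (hcont.mono (fun s hs => lt_of_lt_of_le ht hs.1))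
      · intro s hs
        rw [interior_Icc] at hs
        exact ((hderiv s (lt_of_lt_of_le ht hs.1.le)).differentiableAt).differentiableWithinAt
      · intro s hs
        rw [interior_Icc] at hs
        have hs0 : (0 : ℝ) < s := lt_of_lt_of_le ht hs.1.le
        rw [(hderiv s hs0).deriv]
        have h3 : (s - 1) ^ 3 ≤ 0 := by nlinarith [sq_nonneg (s - 1), hs.2]
        have : 3 * (s - 1) ^ 3 ≤ 0 := by linarith
        exact div_nonpos_of_nonpos_of_nonneg this hs0.le
    have h0 := hanti (Set.mem_Icc.mpr ⟨le_refl t, h.le⟩) (Set.mem_Icc.mpr ⟨h.le, le_refl 1⟩) h.le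
    rw [hf1] at h0
    have h0' : 0 ≤ t ^ 3 - 1 - 9 / 2 * (t - 1) ^ 2 - 3 * Real.log t := h0
    linarith

/-- Let `d > 0`, `c = 1/√(9d)`, and `g(x) = 3d ln(1+cx) − d(1+cx)³ + d` for `x > −1/c`.
Then `g(x) ≤ −x²/2`. -/
theorem g_le_neg_half_sq (d : ℝ) (hd : 0 < d) (c : ℝ) (hc : c = 1 / Real.sqrt (9 * d))
    (x : ℝ) (hx : -1 / c < x) :
    3 * d * Real.log (1 + c * x) - d * (1 + c * x) ^ 3 + d ≤ -x ^ 2 / 2 := by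
  have h9d : (0 : ℝ) < 9 * d := by linarith
  have hsqrt : 0 < Real.sqrt (9 * d) := Real.sqrt_pos.mpr h9d
  have hc0 : 0 < c := by rw [hc]; positivity
  have hc2 : 9 * d * c ^ 2 = 1 := by
    rw [hc]
    rw [div_pow, one_pow, Real.sq_sqrt h9d.le]
    field_simp
  have ht : 0 < 1 + c * x := by
    have h' : -1 < x * c := (div_lt_iff₀ hc0).mp hx
    nlinarith
  have hkey := key_log_ineq (1 + c * x) ht
  -- multiply by d > 0
  have hmul : 3 * d * Real.log (1 + c * x) ≤
      d * (1 + c * x) ^ 3 - d - 9 * d / 2 * (c * x) ^ 2 := by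
    nlinarith [hkey]
  have hx2 : 9 * d / 2 * (c * x) ^ 2 = x ^ 2 / 2 := by
    have : 9 * d * (c ^ 2 * x ^ 2) = x ^ 2 := by
      calc 9 * d * (c ^ 2 * x ^ 2) = (9 * d * c ^ 2) * x ^ 2 := by ring
        _ = x ^ 2 := by rw [hc2]; ring
    nlinarith [this]
  linarith [hmul, hx2.le, hx2.ge]
end

section
/- Define p(α) = e^{α − 1/3} · √(α − 1/3) · Γ(α) / (√(2π) · (α − 1/3)^α) for real α ≥ 1. Then p(α) > 0.95 for every integer α ≥ 1. -/
open Real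

private lemma sqrt_pi_le_stirlingSeq' (m : ℕ) : √π ≤ Stirling.stirlingSeq (m+1) := by
  have h : Filter.Tendsto (Stirling.stirlingSeq ∘ Nat.succ) Filter.atTop (nhds (√π)) :=
    Stirling.tendsto_stirlingSeq_sqrt_pi.comp (Filter.tendsto_add_atTop_nat 1)
  exact Stirling.stirlingSeq'_antitone.le_of_tendsto h m

private lemma stirling_lb' (m : ℕ) (hm : 1 ≤ m) :
    √(2*π) * √m * ((m:ℝ)/exp 1)^m ≤ (Nat.factorial m : ℝ) := by
  obtain ⟨k, rfl⟩ := Nat.exists_eq_add_of_le' hm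
  have h := sqrt_pi_le_stirlingSeq' k
  rw [Stirling.stirlingSeq] at h
  have h2 : (0:ℝ) < √(2*(k+1:ℕ)) * ((k+1:ℕ)/exp 1)^(k+1) := by positivity
  rw [le_div_iff₀ h2] at h
  calc √(2*π) * √(k+1:ℕ) * ((k+1:ℕ)/exp 1)^(k+1)
      = √π * (√(2*(k+1:ℕ)) * ((k+1:ℕ)/exp 1)^(k+1)) := by
        rw [show (2:ℝ)*π = π*2 by ring, sqrt_mul pi_pos.le, sqrt_mul (by norm_num) ((k+1:ℕ):ℝ)]
        ring
    _ ≤ _ := h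

private lemma exp_core' (m : ℕ) (hm : 5 ≤ m) :
    exp (2/3) * (√(m:ℝ)/√((m:ℝ)+2/3)) * ((m:ℝ)/((m:ℝ)+2/3))^m ≥ exp (-(1/20)) := by
  have hm5 : (5:ℝ) ≤ (m:ℝ) := by exact_mod_cast hm
  have hm0 : (0:ℝ) < m := by linarith
  set c : ℝ := (m:ℝ) + 2/3 with hc_def
  have hc : (0:ℝ) < c := by positivity
  set s : ℝ := 1/(3*(m:ℝ)) + 1/(3*(m:ℝ)+1) with hs_def
  have hs : 0 < s := by positivity
  have h1 : c / m ≤ exp s := by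
    have e1 : (1:ℝ) + 1/(3*m) ≤ exp (1/(3*m)) := by
      have := Real.add_one_le_exp (1/(3*(m:ℝ))); linarith
    have e2 : (1:ℝ) + 1/(3*m+1) ≤ exp (1/(3*m+1)) := by
      have := Real.add_one_le_exp (1/(3*(m:ℝ)+1)); linarith
    have key : c / m = (1 + 1/(3*m)) * (1 + 1/(3*m+1)) := by
      field_simp; ring
    rw [key, hs_def, exp_add]
    exact mul_le_mul e1 e2 (by positivity) (exp_nonneg _)
  have h2 : exp (-s) ≤ (m:ℝ)/c := by
    rw [exp_neg, inv_le_iff_one_le_mul₀ (exp_pos s)]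
    have hmc : (0:ℝ) ≤ (m:ℝ)/c := by positivity
    nlinarith [mul_le_mul_of_nonneg_left h1 hmc,
      (by field_simp : (m:ℝ)/c * (c/m) = 1)]
  have h3 : exp (-s) ^ m ≤ ((m:ℝ)/c)^m := pow_le_pow_left₀ (exp_nonneg _) h2 m
  have h3' : exp (-(s*m)) ≤ ((m:ℝ)/c)^m := by
    calc exp (-(s*m)) = exp (-s) ^ m := by
          rw [← Real.exp_nat_mul]; ring_nf
      _ ≤ _ := h3
  have h4 : exp (-(s/2)) ≤ √(m:ℝ)/√c := by
    rw [← Real.sqrt_div hm0.le]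
    have : exp (-(s/2)) = √(exp (-s)) := by
      rw [show rexp (-s) = (rexp (-(s/2)))^2 by rw [← Real.exp_nat_mul]; ring_nf,
        Real.sqrt_sq (exp_nonneg _)]
    rw [this]
    exact Real.sqrt_le_sqrt h2
  calc exp (-(1/20)) ≤ exp (2/3 + (-(s/2)) + (-(s*m))) := by
        apply Real.exp_le_exp.mpr
        have hd : (0:ℝ) < 3*(m:ℝ)*(3*(m:ℝ)+1) := by positivity
        have hse : s = (6*(m:ℝ)+1)/(3*(m:ℝ)*(3*(m:ℝ)+1)) := by
          rw [hs_def]; field_simp; ring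
        have hkey : s * ((m:ℝ) + 1/2) ≤ 43/60 := by
          rw [hse, div_mul_eq_mul_div, div_le_iff₀ hd]
          nlinarith
        nlinarith
    _ = exp (2/3) * exp (-(s/2)) * exp (-(s*m)) := by rw [← exp_add, ← exp_add]
    _ ≤ exp (2/3) * (√(m:ℝ)/√c) * (((m:ℝ)/c)^m) := by
        apply mul_le_mul
        · exact mul_le_mul_of_nonneg_left h4 (exp_nonneg _)
        · exact h3'
        · exact exp_nonneg _
        · positivity

private lemma gen_case' (m : ℕ) (hm : 5 ≤ m) :
    (0.95:ℝ) < exp ((m:ℝ)+2/3) * √((m:ℝ)+2/3) * (Nat.factorial m : ℝ) /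
      (√(2*π) * ((m:ℝ)+2/3)^(m+1)) := by
  have hm5 : (5:ℝ) ≤ (m:ℝ) := by exact_mod_cast hm
  have hm0 : (0:ℝ) < m := by linarith
  set c : ℝ := (m:ℝ) + 2/3 with hc_def
  have hc : (0:ℝ) < c := by positivity
  have hsq : √c * √c = c := Real.mul_self_sqrt hc.le
  have hden : (0:ℝ) < √(2*π) * c^(m+1) := by
    have := Real.pi_pos; positivity
  have hA : exp c * √c * (√(2*π)*√(m:ℝ)*((m:ℝ)/exp 1)^m) / (√(2*π)*c^(m+1))
      ≤ exp c * √c * (Nat.factorial m : ℝ) / (√(2*π)*c^(m+1)) := by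
    gcongr exp c * √c * ?_ / (√(2*π)*c^(m+1))
    exact stirling_lb' m (by omega)
  have hec : exp c = exp 1 ^ m * exp (2/3) := by
    rw [hc_def, Real.exp_add]
    congr 1
    rw [← Real.exp_nat_mul, mul_one]
  have heq : exp c * √c * (√(2*π)*√(m:ℝ)*((m:ℝ)/exp 1)^m) / (√(2*π)*c^(m+1))
      = exp (2/3) * (√(m:ℝ)/√c) * ((m:ℝ)/c)^m := by
    rw [eq_comm, eq_div_iff (ne_of_gt hden)]
    have hcp : c^(m+1) = c^m * (√c*√c) := by rw [pow_succ, hsq]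
    rw [hcp, hec, div_pow, div_pow]
    have h1 : exp 1 ≠ 0 := (exp_pos 1).ne'
    have h2 : √(2*π) ≠ 0 := by have := Real.pi_pos; positivity
    have h3 : √c ≠ 0 := by positivity
    have h4 : c^m ≠ 0 := by positivity
    field_simp
  have h95 : (0.95:ℝ) < exp (-(1/20)) := by
    have := Real.add_one_lt_exp (x := -(1/20)) (by norm_num)
    linarith
  calc (0.95:ℝ) < exp (-(1/20)) := h95
    _ ≤ exp (2/3) * (√(m:ℝ)/√c) * ((m:ℝ)/c)^m := exp_core' m hm
    _ = _ := heq.symm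
    _ ≤ _ := hA

private lemma exp_one_lb : (2.7182818:ℝ) < exp 1 := by
  have := Real.exp_one_gt_d9; norm_num at this ⊢; linarith

private lemma exp_twothirds_lb : (1.9477:ℝ) < exp (2/3) := by
  have he2 : (7.38905:ℝ) < exp 2 := by
    have h := Real.exp_one_gt_d9
    have h2 : rexp 1 * rexp 1 = rexp 2 := by rw [← Real.exp_add]; norm_num
    nlinarith [Real.exp_pos 1]
  have h3 : rexp (2/3) ^ (3:ℕ) = rexp 2 := by rw [← Real.exp_nat_mul]; norm_num
  by_contra hcon
  push_neg at hcon
  have : rexp (2/3) ^ (3:ℕ) ≤ (1.9477:ℝ)^(3:ℕ) := pow_le_pow_left₀ (exp_nonneg _) hcon 3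
  rw [h3] at this
  norm_num at this
  linarith

private lemma sqrt_two_pi_ub : √(2*π) < 2.5067 := by
  rw [show (2.5067:ℝ) = √(2.5067^2) from (Real.sqrt_sq (by norm_num)).symm]
  apply Real.sqrt_lt_sqrt (by have := Real.pi_pos; positivity)
  have := Real.pi_lt_d6
  nlinarith

set_option maxHeartbeats 1000000 in
/-- For `p(α) = e^{α−1/3} √(α−1/3) Γ(α) / (√(2π) (α−1/3)^α)`, we have `p(α) > 0.95` for
every integer `α ≥ 1`. -/
theorem p_gt (α : ℕ) (hα : 1 ≤ α) :
    0.95 < Real.exp ((α : ℝ) - 1/3) * Real.sqrt ((α : ℝ) - 1/3) * Real.Gamma (α : ℝ) /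
      (Real.sqrt (2 * Real.pi) * ((α : ℝ) - 1/3) ^ ((α : ℝ))) := by
  obtain ⟨m, rfl⟩ := Nat.exists_eq_add_of_le' hα
  have hg : Real.Gamma ((m+1 : ℕ) : ℝ) = (Nat.factorial m : ℝ) := by
    push_cast
    exact Real.Gamma_nat_eq_factorial m
  have hb : ((m+1:ℕ):ℝ) - 1/3 = (m:ℝ) + 2/3 := by push_cast; ring
  rw [hg, hb, show (((m+1:ℕ):ℝ)) = (((m+1:ℕ):ℕ):ℝ) from rfl, Real.rpow_natCast]
  by_cases h5 : 5 ≤ m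
  · exact gen_case' m h5
  · have he := exp_one_lb
    have hE := exp_twothirds_lb
    have hsp := sqrt_two_pi_ub
    have hsp0 : (0:ℝ) < √(2*π) := by have := Real.pi_pos; positivity
    have hpi := Real.pi_pos
    have hpiu : π < 3.141593 := Real.pi_lt_d6
    have hspi : √π < 1.7724541 := by
      rw [show (1.7724541:ℝ) = √(1.7724541^2) from (Real.sqrt_sq (by norm_num)).symm]
      exact Real.sqrt_lt_sqrt hpi.le (by nlinarith)
    have hs2u : √2 < 1.4142136 := by
      rw [show (1.4142136:ℝ) = √(1.4142136^2) from (Real.sqrt_sq (by norm_num)).symm]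
      exact Real.sqrt_lt_sqrt (by norm_num) (by norm_num)
    have hs3u : √3 < 1.7320509 := by
      rw [show (1.7320509:ℝ) = √(1.7320509^2) from (Real.sqrt_sq (by norm_num)).symm]
      exact Real.sqrt_lt_sqrt (by norm_num) (by norm_num)
    have hs3p : (0:ℝ) < √3 := by positivity
    have hs2l : (1.4142135:ℝ) < √2 := by
      rw [show (1.4142135:ℝ) = √(1.4142135^2) from (Real.sqrt_sq (by norm_num)).symm]
      exact Real.sqrt_lt_sqrt (by norm_num) (by norm_num)
    have hs5l : (2.2360679:ℝ) < √5 := by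
      rw [show (2.2360679:ℝ) = √(2.2360679^2) from (Real.sqrt_sq (by norm_num)).symm]
      exact Real.sqrt_lt_sqrt (by norm_num) (by norm_num)
    have hs8l : (2.8284271:ℝ) < √8 := by
      rw [show (2.8284271:ℝ) = √(2.8284271^2) from (Real.sqrt_sq (by norm_num)).symm]
      exact Real.sqrt_lt_sqrt (by norm_num) (by norm_num)
    have hs11l : (3.3166247:ℝ) < √11 := by
      rw [show (3.3166247:ℝ) = √(3.3166247^2) from (Real.sqrt_sq (by norm_num)).symm]
      exact Real.sqrt_lt_sqrt (by norm_num) (by norm_num)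
    have hs14l : (3.7416573:ℝ) < √14 := by
      rw [show (3.7416573:ℝ) = √(3.7416573^2) from (Real.sqrt_sq (by norm_num)).symm]
      exact Real.sqrt_lt_sqrt (by norm_num) (by norm_num)
    have hr0 : (0.8164:ℝ) ≤ √2/√3 := by
      rw [le_div_iff₀ hs3p]; nlinarith
    have hr1 : (1.29099:ℝ) ≤ √5/√3 := by
      rw [le_div_iff₀ hs3p]; nlinarith
    have hr2 : (1.63299:ℝ) ≤ √8/√3 := by
      rw [le_div_iff₀ hs3p]; nlinarith
    have hr3 : (1.91485:ℝ) ≤ √11/√3 := by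
      rw [le_div_iff₀ hs3p]; nlinarith
    have hr4 : (2.16024:ℝ) ≤ √14/√3 := by
      rw [le_div_iff₀ hs3p]; nlinarith
    interval_cases m <;> norm_num [Nat.factorial] <;>
      rw [lt_div_iff₀ (by positivity)]
    · -- m = 0 : 19/20 * (√2*√π*(2/3)) < rexp (2/3) * (√2/√3)
      calc (19:ℝ)/20 * (√2*√π*(2/3)) ≤ 19/20 * (1.4142136*1.7724541*(2/3)) := by
            gcongr
        _ < 1.9477 * 0.8164 := by norm_num
        _ ≤ rexp (2/3) * (√2/√3) := mul_le_mul hE.le hr0 (by norm_num) (exp_nonneg _)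
    · rw [show (5:ℝ)/3 = 1 + 2/3 by norm_num, Real.exp_add]
      calc (19:ℝ)/20 * (√2*√π*(25/9)) ≤ 19/20 * (1.4142136*1.7724541*(25/9)) := by
            gcongr
        _ < 2.7182818 * 1.9477 * 1.29099 := by norm_num
        _ ≤ rexp 1 * rexp (2/3) * (√5/√3) := by
            have h1 : (2.7182818:ℝ) * 1.9477 ≤ rexp 1 * rexp (2/3) :=
              mul_le_mul he.le hE.le (by norm_num) (exp_nonneg _)
            exact mul_le_mul h1 hr1 (by norm_num) (by positivity)
    · rw [show (8:ℝ)/3 = 1 + (1 + 2/3) by norm_num, Real.exp_add, Real.exp_add]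
      calc (19:ℝ)/20 * (√2*√π*(512/27)) ≤ 19/20 * (1.4142136*1.7724541*(512/27)) := by
            gcongr
        _ < 2.7182818 * (2.7182818 * 1.9477) * 1.63299 * 2 := by norm_num
        _ ≤ rexp 1 * (rexp 1 * rexp (2/3)) * (√8/√3) * 2 := by
            have h1 : (2.7182818:ℝ) * (2.7182818 * 1.9477) ≤ rexp 1 * (rexp 1 * rexp (2/3)) :=
              mul_le_mul he.le (mul_le_mul he.le hE.le (by norm_num) (exp_nonneg _))
                (by norm_num) (exp_nonneg _)
            have h2 := mul_le_mul h1 hr2 (by norm_num) (by positivity)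
            linarith
    · rw [show (11:ℝ)/3 = 1 + (1 + (1 + 2/3)) by norm_num, Real.exp_add, Real.exp_add,
        Real.exp_add]
      calc (19:ℝ)/20 * (√2*√π*(14641/81)) ≤ 19/20 * (1.4142136*1.7724541*(14641/81)) := by
            gcongr
        _ < 2.7182818 * (2.7182818 * (2.7182818 * 1.9477)) * 1.91485 * 6 := by norm_num
        _ ≤ rexp 1 * (rexp 1 * (rexp 1 * rexp (2/3))) * (√11/√3) * 6 := by
            have h1 : (2.7182818:ℝ) * (2.7182818 * (2.7182818 * 1.9477))
                ≤ rexp 1 * (rexp 1 * (rexp 1 * rexp (2/3))) :=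
              mul_le_mul he.le (mul_le_mul he.le (mul_le_mul he.le hE.le (by norm_num)
                (exp_nonneg _)) (by norm_num) (exp_nonneg _)) (by norm_num) (exp_nonneg _)
            have h2 := mul_le_mul h1 hr3 (by norm_num) (by positivity)
            linarith
    · rw [show (14:ℝ)/3 = 1 + (1 + (1 + (1 + 2/3))) by norm_num, Real.exp_add, Real.exp_add,
        Real.exp_add, Real.exp_add]
      calc (19:ℝ)/20 * (√2*√π*(537824/243)) ≤ 19/20 * (1.4142136*1.7724541*(537824/243)) := by
            gcongr
        _ < 2.7182818 * (2.7182818 * (2.7182818 * (2.7182818 * 1.9477))) * 2.16024 * 24 := by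
            norm_num
        _ ≤ rexp 1 * (rexp 1 * (rexp 1 * (rexp 1 * rexp (2/3)))) * (√14/√3) * 24 := by
            have h1 : (2.7182818:ℝ) * (2.7182818 * (2.7182818 * (2.7182818 * 1.9477)))
                ≤ rexp 1 * (rexp 1 * (rexp 1 * (rexp 1 * rexp (2/3)))) :=
              mul_le_mul he.le (mul_le_mul he.le (mul_le_mul he.le (mul_le_mul he.le hE.le
                (by norm_num) (exp_nonneg _)) (by norm_num) (exp_nonneg _)) (by norm_num)
                (exp_nonneg _)) (by norm_num) (exp_nonneg _)
            have h2 := mul_le_mul h1 hr4 (by norm_num) (by positivity)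
            linarith
end

section
/- The ratio r(α) = p(α+1)/p(α) = e·α·(α − 1/3)^{α − 1/2}/(α + 2/3)^{α + 1/2} satisfies r(α) > 1 for all real α ≥ 1, where p(α) = e^{α−1/3}√(α−1/3)Γ(α)/(√(2π)(α−1/3)^α). -/
open Real Set

section aux

lemma rgo_poly_deriv (x : ℝ) :
    HasDerivAt (fun x : ℝ => x - x^2/2 + x^3/3 - x^4/4 + x^5/5)
      (1 - x + x^2 - x^3 + x^4) x := by
  have h := (((((hasDerivAt_id x).sub ((hasDerivAt_pow 2 x).div_const 2)).add
      ((hasDerivAt_pow 3 x).div_const 3)).sub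
      ((hasDerivAt_pow 4 x).div_const 4)).add
      ((hasDerivAt_pow 5 x).div_const 5))
  refine h.congr_deriv ?_
  push_cast
  ring

lemma rgo_log_deriv (x : ℝ) (h1 : (1:ℝ) + x ≠ 0) :
    HasDerivAt (fun x : ℝ => Real.log (1 + x)) (1/(1+x)) x := by
  simpa using (HasDerivAt.log ((hasDerivAt_id x).const_add 1) h1)

lemma rgo_log_quintic (u : ℝ) (hu : 0 ≤ u) :
    Real.log (1 + u) ≤ u - u^2/2 + u^3/3 - u^4/4 + u^5/5 := by
  set F : ℝ → ℝ := fun x => x - x^2/2 + x^3/3 - x^4/4 + x^5/5 - Real.log (1 + x) with hF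
  have key : MonotoneOn F (Set.Ici 0) := by
    apply monotoneOn_of_hasDerivWithinAt_nonneg (convex_Ici 0)
      (f' := fun x => x^5/(1+x))
    · apply ContinuousOn.sub (by fun_prop)
      apply ContinuousOn.log (by fun_prop)
      intro x hx
      simp only [mem_Ici] at hx
      positivity
    · intro x hx
      rw [interior_Ici] at hx
      simp only [mem_Ioi] at hx
      have h1 : (1:ℝ) + x ≠ 0 := by positivity
      have hd : HasDerivAt F (1 - x + x^2 - x^3 + x^4 - 1/(1+x)) x :=
        (rgo_poly_deriv x).sub (rgo_log_deriv x h1)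
      have heq : 1 - x + x^2 - x^3 + x^4 - 1/(1+x) = x^5/(1+x) := by
        field_simp
        ring
      rw [heq] at hd
      exact hd.hasDerivWithinAt
    · intro x hx
      rw [interior_Ici] at hx
      simp only [mem_Ioi] at hx
      positivity
  have h0 : F 0 = 0 := by simp [hF]
  have h := key self_mem_Ici (mem_Ici.mpr hu) hu
  rw [h0] at h
  simp only [hF] at h
  linarith

lemma rgo_log_lower (t : ℝ) (h0 : 0 ≤ t) (h1 : t ≤ 1/3) :
    -t - t^2/2 - t^3/3 - 3/2 * t^4 ≤ Real.log (1 - t) := by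
  have habs : |t| < 1 := by rw [abs_of_nonneg h0]; linarith
  have h := Real.abs_log_sub_add_sum_range_le habs 3
  rw [abs_of_nonneg h0] at h
  have hsum : (∑ i ∈ Finset.range 3, t ^ (i + 1) / (i + 1)) = t + t^2/2 + t^3/3 := by
    simp [Finset.sum_range_succ]
    norm_num
  rw [hsum] at h
  have hb := abs_le.mp h
  have h2 : t^4 / (1 - t) ≤ 3/2 * t^4 := by
    rw [div_le_iff₀ (by linarith)]
    nlinarith [pow_nonneg h0 4]
  linarith [hb.1]

end aux

/-- `p(α) = e^{α−1/3} √(α−1/3) Γ(α) / (√(2π) (α−1/3)^α)`. -/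
noncomputable def pFun (α : ℝ) : ℝ :=
  Real.exp (α - 1/3) * Real.sqrt (α - 1/3) * Real.Gamma α /
    (Real.sqrt (2 * Real.pi) * (α - 1/3) ^ α)

/-- The ratio `r(α) = p(α+1)/p(α)` equals `e·α·(α−1/3)^{α−1/2}/(α+2/3)^{α+1/2}` and is
greater than `1` for all real `α ≥ 1`. -/
theorem ratio_gt_one (α : ℝ) (hα : 1 ≤ α) :
    pFun (α + 1) / pFun α =
      Real.exp 1 * α * (α - 1/3) ^ (α - 1/2) / (α + 2/3) ^ (α + 1/2) ∧
    1 < Real.exp 1 * α * (α - 1/3) ^ (α - 1/2) / (α + 2/3) ^ (α + 1/2) := by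
  have ha : 0 < α := by linarith
  have hx : 0 < α - 1/3 := by linarith
  have hy : 0 < α + 2/3 := by linarith
  constructor
  · -- the identity
    have hΓ : 0 < Real.Gamma α := Real.Gamma_pos_of_pos ha
    have hΓ1 : Real.Gamma (α + 1) = α * Real.Gamma α := Real.Gamma_add_one ha.ne'
    have hs2π : 0 < Real.sqrt (2 * Real.pi) := Real.sqrt_pos.mpr (by positivity)
    have e1 : α + 1 - 1/3 = α + 2/3 := by ring
    have hsx : Real.sqrt (α - 1/3) = (α - 1/3) ^ (1/2 : ℝ) := Real.sqrt_eq_rpow _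
    have hsy : Real.sqrt (α + 2/3) = (α + 2/3) ^ (1/2 : ℝ) := Real.sqrt_eq_rpow _
    have hxadd : (α - 1/3) ^ (α - 1/2) * (α - 1/3) ^ (1/2 : ℝ) = (α - 1/3) ^ α := by
      rw [← Real.rpow_add hx]; norm_num
    have hyadd : (α + 2/3) ^ (α + 1/2) * (α + 2/3) ^ (1/2 : ℝ) = (α + 2/3) ^ (α + 1 : ℝ) := by
      rw [← Real.rpow_add hy]; ring_nf
    have hexp : Real.exp (α + 2/3) = Real.exp 1 * Real.exp (α - 1/3) := by
      rw [← Real.exp_add]; ring_nf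
    have hCpos : (0:ℝ) < (α - 1/3) ^ (α - 1/2 : ℝ) := Real.rpow_pos_of_pos hx _
    have hBpos : (0:ℝ) < (α - 1/3) ^ (1/2 : ℝ) := Real.rpow_pos_of_pos hx _
    have hFpos : (0:ℝ) < (α + 2/3) ^ (α + 1/2 : ℝ) := Real.rpow_pos_of_pos hy _
    have hEpos : (0:ℝ) < (α + 2/3) ^ (1/2 : ℝ) := Real.rpow_pos_of_pos hy _
    have hexppos := Real.exp_pos (α - 1/3)
    unfold pFun
    rw [e1, hΓ1, hsx, hsy, hexp, ← hxadd, ← hyadd]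
    generalize (α - 1/3 : ℝ) ^ (α - 1/2 : ℝ) = C at hCpos ⊢
    generalize (α - 1/3 : ℝ) ^ (1/2 : ℝ) = B at hBpos ⊢
    generalize (α + 2/3 : ℝ) ^ (α + 1/2 : ℝ) = F at hFpos ⊢
    generalize (α + 2/3 : ℝ) ^ (1/2 : ℝ) = E at hEpos ⊢
    generalize Real.exp (α - 1/3) = EX at hexppos ⊢
    rw [div_div_div_eq]
    field_simp
  · -- the inequality
    obtain ⟨t, ht_def⟩ : ∃ t : ℝ, t = 1 / (3 * α) := ⟨_, rfl⟩
    have ht0 : 0 < t := by rw [ht_def]; positivity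
    have ht13 : t ≤ 1/3 := by
      rw [ht_def, div_le_iff₀ (by positivity)]; linarith
    have hat : α * t = 1/3 := by rw [ht_def]; field_simp
    have hxe : α - 1/3 = α * (1 - t) := by rw [mul_sub, hat]; ring
    have hye : α + 2/3 = α * (1 + 2*t) := by rw [mul_add, mul_comm 2 t, ← mul_assoc, hat]; ring
    have h1t : (0:ℝ) < 1 - t := by linarith
    have h12t : (0:ℝ) < 1 + 2*t := by linarith
    have hlogx : Real.log (α - 1/3) = Real.log α + Real.log (1 - t) := by
      rw [hxe, Real.log_mul ha.ne' h1t.ne']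
    have hlogy : Real.log (α + 2/3) = Real.log α + Real.log (1 + 2*t) := by
      rw [hye, Real.log_mul ha.ne' h12t.ne']
    have hα_exp : Real.exp (Real.log α) = α := Real.exp_log ha
    have hrw : Real.exp (1 + Real.log α + (α - 1/2) * Real.log (α - 1/3)
          - (α + 1/2) * Real.log (α + 2/3))
        = Real.exp 1 * α * (α - 1/3) ^ (α - 1/2) / (α + 2/3) ^ (α + 1/2) := by
      rw [Real.rpow_def_of_pos hx, Real.rpow_def_of_pos hy]
      rw [show (1 : ℝ) + Real.log α + (α - 1/2) * Real.log (α - 1/3)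
            - (α + 1/2) * Real.log (α + 2/3)
          = 1 + Real.log α + Real.log (α - 1/3) * (α - 1/2)
            - Real.log (α + 2/3) * (α + 1/2) from by ring]
      rw [Real.exp_sub, Real.exp_add, Real.exp_add, hα_exp]
    rw [← hrw, Real.one_lt_exp_iff]
    rw [hlogx, hlogy]
    have hLB := rgo_log_lower t ht0.le ht13
    have hUB := rgo_log_quintic (2*t) (by linarith)
    have hUB' : Real.log (1 + 2*t) ≤ 2*t - 2*t^2 + 8/3*t^3 - 4*t^4 + 32/5*t^5 := by
      have hexpand : (2*t) - (2*t)^2/2 + (2*t)^3/3 - (2*t)^4/4 + (2*t)^5/5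
          = 2*t - 2*t^2 + 8/3*t^3 - 4*t^4 + 32/5*t^5 := by ring
      linarith [hUB]
    have hc1 : (0:ℝ) ≤ α - 1/2 := by linarith
    have hc2 : (0:ℝ) ≤ α + 1/2 := by linarith
    have e1 : (α - 1/2) * (-t - t^2/2 - t^3/3 - 3/2 * t^4) ≤ (α - 1/2) * Real.log (1 - t) :=
      mul_le_mul_of_nonneg_left hLB hc1
    have e2 : (α + 1/2) * Real.log (1 + 2*t) ≤
        (α + 1/2) * (2*t - 2*t^2 + 8/3*t^3 - 4*t^4 + 32/5*t^5) :=
      mul_le_mul_of_nonneg_left hUB' hc2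
    have key : 0 < 1 + (α - 1/2) * (-t - t^2/2 - t^3/3 - 3/2 * t^4)
        - (α + 1/2) * (2*t - 2*t^2 + 8/3*t^3 - 4*t^4 + 32/5*t^5) := by
      have hG : 1 + (α - 1/2) * (-t - t^2/2 - t^3/3 - 3/2 * t^4)
          - (α + 1/2) * (2*t - 2*t^2 + 8/3*t^3 - 4*t^4 + 32/5*t^5)
          = t^2/4 - t^3/3 + 37/60*t^4 - 16/5*t^5 := by
        linear_combination (-3 + 3/2*t - 3*t^2 + 5/2*t^3 - 32/5*t^4) * hat
      rw [hG]
      have h3 : t^3 ≤ t^2/3 := by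
        calc t^3 = t^2 * t := by ring
        _ ≤ t^2 * (1/3) := mul_le_mul_of_nonneg_left ht13 (sq_nonneg t)
        _ = t^2/3 := by ring
      have h33 : t^3 ≤ 1/27 := by
        calc t^3 ≤ (1/3:ℝ)^3 := pow_le_pow_left₀ ht0.le ht13 3
        _ = 1/27 := by norm_num
      have h5 : t^5 ≤ t^2/27 := by
        calc t^5 = t^2 * t^3 := by ring
        _ ≤ t^2 * (1/27) := mul_le_mul_of_nonneg_left h33 (sq_nonneg t)
        _ = t^2/27 := by ring
      have h4 : (0:ℝ) ≤ t^4 := by positivity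
      have h2 : (0:ℝ) < t^2 := by positivity
      linarith
    have hfinal : 1 + Real.log α + (α - 1/2) * (Real.log α + Real.log (1 - t))
        - (α + 1/2) * (Real.log α + Real.log (1 + 2*t))
        = 1 + (α - 1/2) * Real.log (1 - t) - (α + 1/2) * Real.log (1 + 2*t) := by ring
    rw [hfinal]
    linarith [e1, e2, key]
end

section
/- Let d > 0, c = 1/√(9d), and s(x) = x²/2 + d − d(1+cx)³ + 3d·ln(1+cx) on (−1/c, ∞). Then s'(x)² + s''(x) = c²x²(c²x⁴ − 6cx − 9)/(9(cx+1)²), and the polynomial w(x) = c²x⁴ − 6cx − 9 has exactly one real root in (−1/c, 0) and exactly one real root in (0, ∞) whenever 9d > 3. -/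
/-- For `s(x) = x²/2 + d − d(1+cx)³ + 3d ln(1+cx)` with `d > 0`, `c = 1/√(9d)`:
`s'(x)² + s''(x) = c²x²(c²x⁴ − 6cx − 9)/(9(cx+1)²)` on `(−1/c, ∞)`, and if `9d > 3` the
polynomial `w(x) = c²x⁴ − 6cx − 9` has exactly one real root in `(−1/c, 0)` and exactly
one in `(0, ∞)`. -/
theorem s_second_order_and_roots (d : ℝ) (hd : 0 < d) (c : ℝ)
    (hc : c = 1 / Real.sqrt (9 * d)) :
    (∀ x, -1 / c < x →
      (deriv (fun x => x ^ 2 / 2 + d - d * (1 + c * x) ^ 3 + 3 * d * Real.log (1 + c * x)) x) ^ 2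
        + deriv (deriv
            (fun x => x ^ 2 / 2 + d - d * (1 + c * x) ^ 3 + 3 * d * Real.log (1 + c * x))) x
      = c ^ 2 * x ^ 2 * (c ^ 2 * x ^ 4 - 6 * c * x - 9) / (9 * (c * x + 1) ^ 2)) ∧
    (3 < 9 * d →
      (∃! x, x ∈ Set.Ioo (-1 / c) 0 ∧ c ^ 2 * x ^ 4 - 6 * c * x - 9 = 0) ∧
      (∃! x, x ∈ Set.Ioi (0 : ℝ) ∧ c ^ 2 * x ^ 4 - 6 * c * x - 9 = 0)) := by
  have h9d : (0:ℝ) < 9 * d := by linarith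
  have hsq : 0 < Real.sqrt (9 * d) := Real.sqrt_pos.mpr h9d
  have hc0 : 0 < c := by rw [hc]; positivity
  have hc2 : c ^ 2 * (9 * d) = 1 := by
    rw [hc, div_pow, one_pow, Real.sq_sqrt h9d.le]
    field_simp
  have hdval : d = 1 / (9 * c ^ 2) := by
    field_simp
    nlinarith [hc2]
  constructor
  · -- derivative identity
    intro x hx
    have key : ∀ y : ℝ, -1 / c < y →
        HasDerivAt (fun x => x ^ 2 / 2 + d - d * (1 + c * x) ^ 3 + 3 * d * Real.log (1 + c * x))
          (y - 3 * d * c * (1 + c * y) ^ 2 + 3 * d * c * (1 + c * y)⁻¹) y := by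
      intro y hy
      have hu : 0 < 1 + c * y := by
        have h' : (-1 : ℝ) < y * c := (div_lt_iff₀ hc0).mp hy
        nlinarith
      have h1 : HasDerivAt (fun x : ℝ => 1 + c * x) c y := by
        simpa using ((hasDerivAt_id y).const_mul c).const_add 1
      have h2 : HasDerivAt (fun x : ℝ => x ^ 2 / 2 + d) y y := by
        have := ((hasDerivAt_pow 2 y).div_const 2).add_const d
        simpa using this
      have h3 := (h1.pow 3).const_mul d
      have h4 := (h1.log hu.ne').const_mul (3 * d)
      have htot := (h2.sub h3).add h4
      refine htot.congr_deriv ?_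
      push_cast
      field_simp [hu.ne']
    have hu : 0 < 1 + c * x := by
      have h' : (-1 : ℝ) < x * c := (div_lt_iff₀ hc0).mp hx
      nlinarith
    have hune : (1 + c * x) ≠ 0 := hu.ne'
    have hd1 : deriv (fun x => x ^ 2 / 2 + d - d * (1 + c * x) ^ 3 + 3 * d * Real.log (1 + c * x)) x
        = x - 3 * d * c * (1 + c * x) ^ 2 + 3 * d * c * (1 + c * x)⁻¹ := (key x hx).deriv
    have hEq : deriv (fun x => x ^ 2 / 2 + d - d * (1 + c * x) ^ 3 + 3 * d * Real.log (1 + c * x))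
        =ᶠ[nhds x] fun y => y - 3 * d * c * (1 + c * y) ^ 2 + 3 * d * c * (1 + c * y)⁻¹ := by
      filter_upwards [isOpen_Ioi.mem_nhds (show x ∈ Set.Ioi (-1 / c) from hx)] with y hy
      exact (key y hy).deriv
    rw [hd1, hEq.deriv_eq]
    have h1 : HasDerivAt (fun x : ℝ => 1 + c * x) c x := by
      simpa using ((hasDerivAt_id x).const_mul c).const_add 1
    have hg : HasDerivAt (fun y : ℝ => y - 3 * d * c * (1 + c * y) ^ 2 + 3 * d * c * (1 + c * y)⁻¹)
        (1 - 3 * d * c * (2 * (1 + c * x) ^ 1 * c) + 3 * d * c * (-c / (1 + c * x) ^ 2)) x := by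
      exact ((hasDerivAt_id x).sub ((h1.pow 2).const_mul (3 * d * c))).add
        ((h1.inv hune).const_mul (3 * d * c))
    rw [hg.deriv, hdval]
    have hcx : c * x + 1 ≠ 0 := by rw [add_comm] at hune; exact hune
    have hxc : 1 + x * c ≠ 0 := by rwa [mul_comm] at hune
    have hxc' : x * c + 1 ≠ 0 := by rwa [mul_comm] at hcx
    field_simp [hune, hcx, hc0.ne', hxc, hxc']
    ring
  · -- root counting
    intro h3d
    have hc13 : c ^ 2 < 1 / 3 := by nlinarith [hc2]
    set P : ℝ → ℝ := fun x => c ^ 2 * x ^ 4 - 6 * c * x - 9 with hP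
    set h : ℝ → ℝ := fun x => c ^ 2 * x ^ 3 - 6 * c - 9 / x with hh
    have hPcont : Continuous P := by fun_prop
    have hPh : ∀ x : ℝ, x ≠ 0 → P x = x * h x := by
      intro x hx0
      simp only [hP, hh]
      field_simp
    have hhd : ∀ y : ℝ, y ≠ 0 → HasDerivAt h (3 * c ^ 2 * y ^ 2 + 9 / y ^ 2) y := by
      intro y hy
      have h1 : HasDerivAt (fun t : ℝ => c ^ 2 * t ^ 3 - 6 * c) (c ^ 2 * (3 * y ^ 2 * 1)) y := by
        exact (((hasDerivAt_id y).pow 3).const_mul (c ^ 2)).sub_const (6 * c)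
      have h2 : HasDerivAt (fun t : ℝ => 9 / t) (9 * (-1 / y ^ 2)) y := by
        simpa [div_eq_mul_inv, mul_comm] using (hasDerivAt_inv hy).const_mul 9
      have := h1.sub h2
      refine this.congr_deriv ?_
      field_simp
      ring
    have hderpos : ∀ y : ℝ, y ≠ 0 → 0 < 3 * c ^ 2 * y ^ 2 + 9 / y ^ 2 := by
      intro y hy
      have hy2 : 0 < y ^ 2 := by positivity
      have : 0 < 9 / y ^ 2 := by positivity
      nlinarith [sq_nonneg (c * y)]
    have hmono_neg : StrictMonoOn h (Set.Iio 0) := by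
      apply strictMonoOn_of_deriv_pos (convex_Iio 0)
      · intro y hy
        exact (hhd y (ne_of_lt hy)).continuousAt.continuousWithinAt
      · intro y hy
        rw [interior_Iio] at hy
        rw [(hhd y (ne_of_lt hy)).deriv]
        exact hderpos y (ne_of_lt hy)
    have hmono_pos : StrictMonoOn h (Set.Ioi 0) := by
      apply strictMonoOn_of_deriv_pos (convex_Ioi 0)
      · intro y hy
        exact (hhd y (ne_of_gt hy)).continuousAt.continuousWithinAt
      · intro y hy
        rw [interior_Ioi] at hy
        rw [(hhd y (ne_of_gt hy)).deriv]
        exact hderpos y (ne_of_gt hy)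
    have hroot_h : ∀ x : ℝ, x ≠ 0 → P x = 0 → h x = 0 := by
      intro x hx0 hPx
      rcases mul_eq_zero.mp (by rw [← hPh x hx0]; exact hPx) with h' | h'
      · exact absurd h' hx0
      · exact h'
    have hP0 : P 0 = -9 := by simp [hP]
    constructor
    · -- root in (-1/c, 0)
      have hle : -1 / c ≤ 0 := by
        apply div_nonpos_of_nonpos_of_nonneg <;> linarith
      have hPa : P (-1 / c) = 1 / c ^ 2 - 3 := by
        simp only [hP]
        field_simp
        ring
      have hPapos : 0 < P (-1 / c) := by
        have hcc : (0:ℝ) < c ^ 2 := by positivity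
        rw [hPa, sub_pos, lt_div_iff₀ hcc]
        nlinarith
      obtain ⟨x, hxmem, hxval⟩ := intermediate_value_Icc' hle hPcont.continuousOn
        (Set.mem_Icc.mpr ⟨by rw [hP0]; norm_num, hPapos.le⟩)
      have hxne0 : x ≠ 0 := by
        intro h'
        rw [h', hP0] at hxval; norm_num at hxval
      have hxnea : x ≠ -1 / c := by
        intro h'
        rw [h'] at hxval; rw [hxval] at hPapos; exact lt_irrefl 0 hPapos
      have hxIoo : x ∈ Set.Ioo (-1 / c) 0 :=
        ⟨lt_of_le_of_ne hxmem.1 (Ne.symm hxnea), lt_of_le_of_ne hxmem.2 hxne0⟩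
      refine ⟨x, ⟨hxIoo, hxval⟩, ?_⟩
      intro y ⟨hyIoo, hyval⟩
      have hy0 : y ≠ 0 := ne_of_lt hyIoo.2
      exact hmono_neg.injOn (Set.mem_Iio.mpr hyIoo.2) (Set.mem_Iio.mpr hxIoo.2)
        (by rw [hroot_h y hy0 hyval, hroot_h x hxne0 hxval])
    · -- root in (0, ∞)
      have hle : (0:ℝ) ≤ 3 / c := by positivity
      have hPb : P (3 / c) = 81 / c ^ 2 - 27 := by
        simp only [hP]
        field_simp
        ring
      have hPbpos : 0 < P (3 / c) := by
        rw [hPb]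
        have : (27:ℝ) < 81 / c ^ 2 := by
          rw [lt_div_iff₀ (by positivity : (0:ℝ) < c ^ 2)]
          nlinarith
        linarith
      obtain ⟨x, hxmem, hxval⟩ := intermediate_value_Icc hle hPcont.continuousOn
        (Set.mem_Icc.mpr ⟨by rw [hP0]; norm_num, hPbpos.le⟩)
      have hxne0 : x ≠ 0 := by
        intro h'
        rw [h', hP0] at hxval; norm_num at hxval
      have hxIoi : x ∈ Set.Ioi (0:ℝ) := lt_of_le_of_ne hxmem.1 (Ne.symm hxne0)
      refine ⟨x, ⟨hxIoi, hxval⟩, ?_⟩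
      intro y ⟨hyIoi, hyval⟩
      have hy0 : y ≠ 0 := ne_of_gt hyIoi
      exact hmono_pos.injOn hyIoi hxIoi
        (by rw [hroot_h y hy0 hyval, hroot_h x hxne0 hxval])
end
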